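/- arXiv:1504.00260 — 4 statements merged into one kernel-verified Lean document; each statement's English description precedes it below -/
import Mathlib

section
/- Let K be a positive semidefinite symmetric bilinear form on a real vector space V with basis {α_i : i ∈ I}, whose kernel is one-dimensional, spanned by a vector δ = Σ_i c_i α_i whose coordinates c_i are all strictly positive. Then for every proper subset J ⊊ I, the restriction of K to the span V_J of {α_j : j ∈ J} is positive definite. -/
/-- If K is positive semidefinite with one-dimensional kernel
spanned by δ = Σ c_i α_i with all c_i > 0, then the restriction of K to the
span of any proper subset of the basis is positive definite. -/
theorem proper_parabolic_positive_definite {I V : Type*} [Fintype I]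
    [AddCommGroup V] [Module ℝ V]
    (α : Module.Basis I ℝ V) (K : V →ₗ[ℝ] V →ₗ[ℝ] ℝ)
    (hsym : ∀ x y, K x y = K y x) (hpsd : ∀ x, 0 ≤ K x x)
    (c : I → ℝ) (hc : ∀ i, 0 < c i)
    (hker : ∀ x : V, (∀ y, K x y = 0) ↔ ∃ r : ℝ, x = r • (∑ i, c i • α i)) :
    ∀ J : Set I, J ≠ Set.univ →
      ∀ x ∈ Submodule.span ℝ (α '' J), x ≠ 0 → 0 < K x x := by
  intro J hJ x hx hx0
  rcases (hpsd x).lt_or_eq with h | h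
  · exact h
  -- K x x = 0 ⇒ K x y = 0 for all y
  have hzero : ∀ y, K x y = 0 := by
    intro y
    by_contra hne
    set a := K x y with ha
    set b := K y y with hb
    have hb0 : 0 ≤ b := hpsd y
    set t : ℝ := -a / (b + 1) with ht
    have hexp : K (x + t • y) (x + t • y) = 2 * t * a + t ^ 2 * b := by
      simp only [map_add, map_smul, LinearMap.add_apply, LinearMap.smul_apply, smul_eq_mul]
      rw [hsym y x, ← h]
      ring
    have hge := hpsd (x + t • y)
    rw [hexp] at hge
    have hb1 : (0:ℝ) < b + 1 := by linarith
    have ha2 : 0 < a ^ 2 := by positivity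
    have key : 2 * t * a + t ^ 2 * b = -(a ^ 2 * (b + 2)) / (b + 1) ^ 2 := by
      rw [ht]; field_simp; ring
    have hlt : 2 * t * a + t ^ 2 * b < 0 := by
      rw [key]
      apply div_neg_of_neg_of_pos
      · nlinarith
      · positivity
    linarith
  rcases (hker x).mp hzero with ⟨r, hr⟩
  have hi : ∃ i, i ∉ J := by
    by_contra hall
    push_neg at hall
    exact hJ (Set.eq_univ_of_forall hall)
  obtain ⟨i, hiJ⟩ := hi
  have hmem : ↑(α.repr x).support ⊆ J := (α.mem_span_image).mp hx
  have hrepr0 : α.repr x i = 0 := by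
    by_contra hne
    exact hiJ (hmem (Finsupp.mem_support_iff.mpr hne))
  have hrepr : α.repr x i = r * c i := by
    rw [hr, map_smul, Finsupp.smul_apply, smul_eq_mul, map_sum,
      Finsupp.finset_sum_apply]
    congr 1
    rw [Finset.sum_eq_single i]
    · simp
    · intro j _ hj; simp [Finsupp.single_apply, hj]
    · intro hi; exact absurd (Finset.mem_univ i) hi
  have hr0 : r = 0 := by
    have := hrepr0.symm.trans hrepr
    rcases mul_eq_zero.mp this.symm with h' | h'
    · exact h'
    · exact absurd h' (hc i).ne'
  exact absurd (by rw [hr, hr0, zero_smul]) hx0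
end

section
/- Let W be a Coxeter group acting on V by its reflection representation, and let c = s_1 s_2 ⋯ s_n be a Coxeter element (each simple reflection appearing exactly once). For each Coxeter element c let ω_c be the associated skew form (so that ω_c(α_i^∨, α_j) > 0 if s_i precedes s_j in every reduced word for c, and ω_c(α_i^∨, α_j) < 0 if s_j precedes s_i, and = 0 if s_i, s_j commute, with |ω_c(α_i^∨, α_j)| = |a_{ij}|). If s is initial or final in c, then ω_c(x, y) = ω_{scs}(s x, s y) for all x, y ∈ V. Consequently, applying this n times, ω_c(c x, c y) = ω_c(x, y) for all x, y ∈ V; that is, ω_c is invariant under the action of c. -/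
/-- Negate row and column `s` of `C`. -/
def negRC {I : Type*} [DecidableEq I] (C : I → I → ℤ) (s : I) : I → I → ℤ :=
  fun i j => if i = s ∨ j = s then -C i j else C i j

/-- Iteratively negate rows/columns indexed by a list (rightmost first). -/
def DD {I : Type*} [DecidableEq I] : List I → (I → I → ℤ) → I → I → ℤ
  | [], C => C
  | a :: t, C => negRC (DD t C) a

lemma DD_sign {I : Type*} [DecidableEq I] (t : List I) (C : I → I → ℤ) (i j : I) :
    DD t C i j = C i j ∨ DD t C i j = -C i j := by
  induction t with
  | nil => left; rfl
  | cons a t ih =>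
      have h0 : DD (a :: t) C i j
          = if i = a ∨ j = a then -(DD t C i j) else DD t C i j := rfl
      rw [h0]
      split
      · rcases ih with h | h <;> rw [h]
        · right; rfl
        · left; ring
      · exact ih

lemma negRC_skew {I : Type*} [DecidableEq I] (d : I → ℝ) (C : I → I → ℤ) (s : I)
    (h : ∀ i j, d i * (C i j : ℝ) = -(d j * (C j i : ℝ))) :
    ∀ i j, d i * ((negRC C s) i j : ℝ) = -(d j * ((negRC C s) j i : ℝ)) := by
  intro i j
  unfold negRC
  by_cases hc : i = s ∨ j = s
  · rw [if_pos hc, if_pos (Or.symm hc)]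
    push_cast
    linarith [h i j]
  · rw [if_neg hc, if_neg (fun h' => hc (Or.symm h'))]
    exact h i j

lemma DD_skew {I : Type*} [DecidableEq I] (d : I → ℝ) (t : List I) (C : I → I → ℤ)
    (h : ∀ i j, d i * (C i j : ℝ) = -(d j * (C j i : ℝ))) :
    ∀ i j, d i * ((DD t C) i j : ℝ) = -(d j * ((DD t C) j i : ℝ)) := by
  induction t with
  | nil => exact h
  | cons a t ih => exact negRC_skew d (DD t C) a ih

lemma skew_diag {I : Type*} (d : I → ℝ) (C : I → I → ℤ)
    (hd : ∀ i, 0 < d i)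
    (h : ∀ i j, d i * (C i j : ℝ) = -(d j * (C j i : ℝ))) (i : I) : C i i = 0 := by
  have h1 := h i i
  have h2 : d i * (C i i : ℝ) = 0 := by linarith
  have h3 : (C i i : ℝ) = 0 := by
    rcases mul_eq_zero.mp h2 with h | h
    · exact absurd h (hd i).ne'
    · exact h
  exact_mod_cast h3

lemma skew_nonpos {I : Type*} (d : I → ℝ) (C : I → I → ℤ)
    (hd : ∀ i, 0 < d i)
    (h : ∀ i j, d i * (C i j : ℝ) = -(d j * (C j i : ℝ))) (i j : I)
    (h1 : 0 ≤ C j i) : C i j ≤ 0 := by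
  have h2 := h i j
  have h3 : (0:ℝ) ≤ (C j i : ℝ) := by exact_mod_cast h1
  have h4 : (C i j : ℝ) ≤ 0 := by nlinarith [hd i, hd j]
  exact_mod_cast h4

lemma DD_notmem_notmem {I : Type*} [DecidableEq I] (t : List I) (C : I → I → ℤ) (i j : I)
    (hi : i ∉ t) (hj : j ∉ t) : DD t C i j = C i j := by
  induction t with
  | nil => rfl
  | cons a t ih =>
      have hia : i ≠ a := fun h => hi (h ▸ (List.mem_cons_self : a ∈ a :: t))
      have hja : j ≠ a := fun h => hj (h ▸ (List.mem_cons_self : a ∈ a :: t))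
      show negRC (DD t C) a i j = _
      rw [negRC, if_neg (by tauto)]
      exact ih (fun h => hi (List.mem_cons_of_mem a h)) (fun h => hj (List.mem_cons_of_mem a h))

lemma DD_mem_notmem {I : Type*} [DecidableEq I] (t : List I) (C : I → I → ℤ) (i j : I)
    (hnd : t.Nodup) (hi : i ∈ t) (hj : j ∉ t) : DD t C i j = -C i j := by
  induction t with
  | nil => simp at hi
  | cons a t ih =>
      have hja : j ≠ a := fun h => hj (h ▸ (List.mem_cons_self : a ∈ a :: t))
      have hjt : j ∉ t := fun h => hj (List.mem_cons_of_mem a h)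
      have hnd' : t.Nodup := (List.nodup_cons.mp hnd).2
      show negRC (DD t C) a i j = _
      rcases List.mem_cons.mp hi with rfl | hit
      · have hit : i ∉ t := (List.nodup_cons.mp hnd).1
        rw [negRC, if_pos (Or.inl rfl), DD_notmem_notmem t C i j hit hjt]
      · have hia : i ≠ a := fun h => (List.nodup_cons.mp hnd).1 (h ▸ hit)
        rw [negRC, if_neg (by tauto)]
        exact ih hnd' hit hjt

lemma DD_notmem_mem {I : Type*} [DecidableEq I] (t : List I) (C : I → I → ℤ) (i j : I)
    (hnd : t.Nodup) (hi : i ∉ t) (hj : j ∈ t) : DD t C i j = -C i j := by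
  induction t with
  | nil => simp at hj
  | cons a t ih =>
      have hia : i ≠ a := fun h => hi (h ▸ (List.mem_cons_self : a ∈ a :: t))
      have hit : i ∉ t := fun h => hi (List.mem_cons_of_mem a h)
      have hnd' : t.Nodup := (List.nodup_cons.mp hnd).2
      show negRC (DD t C) a i j = _
      rcases List.mem_cons.mp hj with rfl | hjt
      · have hjt : j ∉ t := (List.nodup_cons.mp hnd).1
        rw [negRC, if_pos (Or.inr rfl), DD_notmem_notmem t C i j hit hjt]
      · have hja : j ≠ a := fun h => (List.nodup_cons.mp hnd).1 (h ▸ hjt)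
        rw [negRC, if_neg (by tauto)]
        exact ih hnd' hit hjt

lemma DD_mem_mem {I : Type*} [DecidableEq I] (t : List I) (C : I → I → ℤ) (i j : I)
    (hnd : t.Nodup) (hi : i ∈ t) (hj : j ∈ t) (hij : i ≠ j) : DD t C i j = C i j := by
  induction t with
  | nil => simp at hi
  | cons a t ih =>
      have hnd' : t.Nodup := (List.nodup_cons.mp hnd).2
      show negRC (DD t C) a i j = _
      rcases List.mem_cons.mp hi with rfl | hit
      · have hit : i ∉ t := (List.nodup_cons.mp hnd).1
        have hjt : j ∈ t := by
          rcases List.mem_cons.mp hj with rfl | h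
          · exact absurd rfl hij
          · exact h
        rw [negRC, if_pos (Or.inl rfl), DD_notmem_mem t C i j hnd' hit hjt]
        ring
      · rcases List.mem_cons.mp hj with rfl | hjt
        · have hjt : j ∉ t := (List.nodup_cons.mp hnd).1
          rw [negRC, if_pos (Or.inr rfl), DD_mem_notmem t C i j hnd' hit hjt]
          ring
        · have hia : i ≠ a := fun h => (List.nodup_cons.mp hnd).1 (h ▸ hit)
          have hja : j ≠ a := fun h => (List.nodup_cons.mp hnd).1 (h ▸ hjt)
          rw [negRC, if_neg (by tauto)]
          exact ih hnd' hit hjt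

/-- The key one-step computation: if `s` is a source or sink of `C`, then
`ω_C(x,y) = ω_{negRC C s}(s x, s y)`. -/
lemma omega_step {I V : Type*} [Fintype I] [DecidableEq I]
    [AddCommGroup V] [Module ℝ V]
    (α : Module.Basis I ℝ V) (d : I → ℝ) (hd : ∀ i, 0 < d i)
    (refl : I → V →ₗ[ℝ] V)
    (ω : (I → I → ℤ) → V →ₗ[ℝ] V →ₗ[ℝ] ℝ)
    (hωdef : ∀ (B' : I → I → ℤ) (i j : I), ω B' (α i) (α j) = d i * (B' i j : ℝ))
    (C : I → I → ℤ)
    (hskewC : ∀ i j, d i * (C i j : ℝ) = -(d j * (C j i : ℝ)))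
    (s : I)
    (hreflC : ∀ j, refl s (α j) = α j - (if s = j then 2 else -|(C s j : ℝ)|) • α s)
    (hs : (∀ j, 0 ≤ C s j) ∨ (∀ j, C s j ≤ 0)) :
    ∀ x y : V, ω C x y = ω (negRC C s) (refl s x) (refl s y) := by
  have hCss : C s s = 0 := skew_diag d C hd hskewC s
  have hss : negRC C s s s = 0 := by simp [negRC, hCss]
  have hgen : ∀ i j : I, negRC C s i s = -C i s ∧ negRC C s s j = -C s j := by
    intro i j; constructor <;> simp [negRC]
  have key : ∀ i j, ω C (α i) (α j) = ω (negRC C s) (refl s (α i)) (refl s (α j)) := by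
    intro i j
    rw [hreflC i, hreflC j]
    simp only [map_sub, map_smul, LinearMap.sub_apply, LinearMap.smul_apply, smul_eq_mul,
      hωdef, hss, (hgen i j).1, (hgen i j).2]
    rcases eq_or_ne i s with hi | hi <;> rcases eq_or_ne j s with hj | hj
    · rw [hi, hj]
      simp [negRC, hCss]
    · rw [hi]
      have h1 : negRC C s s j = -C s j := (hgen s j).2
      simp only [h1, if_pos rfl, if_neg (fun h : s = j => hj h.symm), hCss]
      push_cast
      ring
    · rw [hj]
      have h1 : negRC C s i s = -C i s := (hgen i s).1
      simp only [h1, if_pos rfl, if_neg (fun h : s = i => hi h.symm), hCss]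
      have hsk := hskewC i s
      push_cast
      push_cast at hsk
      nlinarith [hsk]
    · have h1 : negRC C s i j = C i j := by
        rw [negRC, if_neg (by tauto)]
      simp only [h1, if_neg (fun h : s = i => hi h.symm), if_neg (fun h : s = j => hj h.symm),
        hCss]
      have habs : |(C s j : ℝ)| * (C s i : ℝ) = |(C s i : ℝ)| * (C s j : ℝ) := by
        rcases hs with h | h
        · rw [abs_of_nonneg (by exact_mod_cast h j : (0:ℝ) ≤ (C s j : ℝ)),
            abs_of_nonneg (by exact_mod_cast h i : (0:ℝ) ≤ (C s i : ℝ))]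
          ring
        · rw [abs_of_nonpos (by exact_mod_cast h j : (C s j : ℝ) ≤ 0),
            abs_of_nonpos (by exact_mod_cast h i : (C s i : ℝ) ≤ 0)]
          ring
      have hsk := hskewC i s
      push_cast
      push_cast at hsk habs
      linear_combination |(C s j : ℝ)| * hsk - d s * habs
  have heq : ω C = LinearMap.compl₁₂ (ω (negRC C s)) (refl s) (refl s) := by
    apply α.ext; intro i; apply α.ext; intro j
    simpa [LinearMap.compl₁₂_apply] using key i j
  intro x y
  have h := LinearMap.congr_fun (LinearMap.congr_fun heq x) y
  simpa [LinearMap.compl₁₂_apply] using h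

/-- Chain the one-step lemma along a word. -/
lemma omega_chain {I V : Type*} [Fintype I] [DecidableEq I]
    [AddCommGroup V] [Module ℝ V]
    (α : Module.Basis I ℝ V) (d : I → ℝ) (hd : ∀ i, 0 < d i)
    (refl : I → V →ₗ[ℝ] V)
    (ω : (I → I → ℤ) → V →ₗ[ℝ] V →ₗ[ℝ] ℝ)
    (hωdef : ∀ (B' : I → I → ℤ) (i j : I), ω B' (α i) (α j) = d i * (B' i j : ℝ))
    (l : List I) (C : I → I → ℤ)
    (hskewC : ∀ i j, d i * (C i j : ℝ) = -(d j * (C j i : ℝ)))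
    (hreflC : ∀ s j, refl s (α j) = α j - (if s = j then 2 else -|(C s j : ℝ)|) • α s)
    (hsink : ∀ a t, (a :: t) <:+ l → ∀ j, DD t C a j ≤ 0) :
    ∀ x y : V, ω C x y = ω (DD l C) ((l.map refl).prod x) ((l.map refl).prod y) := by
  induction l with
  | nil =>
      intro x y
      simp [DD]
  | cons a t ih =>
      intro x y
      have ih' := ih (fun b u hu => hsink b u (hu.trans (List.suffix_cons a t))) x y
      have hstep := omega_step α d hd refl ω hωdef (DD t C) (DD_skew d t C hskewC) a
        (fun j => by
          have habs : |((DD t C) a j : ℝ)| = |(C a j : ℝ)| := by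
            rcases DD_sign t C a j with h | h <;> rw [h] <;> push_cast <;> simp
          rw [habs]
          exact hreflC a j)
        (Or.inr (hsink a t (List.suffix_refl _)))
      rw [ih', hstep ((t.map refl).prod x) ((t.map refl).prod y)]
      show ω (negRC (DD t C) a) _ _ = _
      rw [List.map_cons, List.prod_cons, Module.End.mul_apply, Module.End.mul_apply]
      rfl

/-- If s is initial or final in the Coxeter element c determined
by an acyclic exchange matrix B, then ω_c(x,y) = ω_{scs}(sx, sy), where the
matrix of scs is obtained from B by negating row and column s.  Consequently,
for any ordering σ of the simple reflections compatible with B (so that the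
corresponding product is c), the form ω_c is invariant under c. -/
theorem omega_c_invariance {I V : Type*} [Fintype I] [DecidableEq I]
    [AddCommGroup V] [Module ℝ V]
    (α : Module.Basis I ℝ V) (B : I → I → ℤ) (d : I → ℝ)
    (hd : ∀ i, 0 < d i)
    (hskew : ∀ i j, d i * (B i j : ℝ) = -(d j * (B j i : ℝ)))
    (A : I → I → ℝ) (hA : ∀ i j, A i j = if i = j then 2 else -|(B i j : ℝ)|)
    (refl : I → V →ₗ[ℝ] V)
    (hrefl : ∀ i j, refl i (α j) = α j - A i j • α i)
    (ω : (I → I → ℤ) → V →ₗ[ℝ] V →ₗ[ℝ] ℝ)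
    (hωdef : ∀ (B' : I → I → ℤ) (i j : I), ω B' (α i) (α j) = d i * (B' i j : ℝ))
    (s : I)
    (hs : (∀ j, 0 ≤ B s j) ∨ (∀ j, B s j ≤ 0)) :
    (∀ x y : V, ω B x y =
        ω (fun i j => if i = s ∨ j = s then -B i j else B i j)
          (refl s x) (refl s y))
    ∧ ∀ (n : ℕ) (σ : Fin n ≃ I),
        (∀ i j : Fin n, i < j → 0 ≤ B (σ i) (σ j)) →
        ∀ x y : V,
          ω B ((List.ofFn fun i => refl (σ i)).prod x)
              ((List.ofFn fun i => refl (σ i)).prod y) = ω B x y := by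
  have hreflB : ∀ s j, refl s (α j) = α j - (if s = j then 2 else -|(B s j : ℝ)|) • α s := by
    intro s j
    rw [hrefl s j, hA s j]
  constructor
  · exact omega_step α d hd refl ω hωdef B hskew s (hreflB s) hs
  · intro n σ hcompat x y
    set l : List I := List.ofFn (fun i : Fin n => σ i) with hl
    have hnodup : l.Nodup := by
      rw [hl, List.nodup_ofFn]
      exact σ.injective
    have hBii : ∀ i, B i i = 0 := skew_diag d B hd hskew
    have hmem : ∀ i : I, i ∈ l := by
      intro i
      rw [hl]
      exact List.mem_ofFn.mpr ⟨σ.symm i, by simp⟩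
    have hpw : l.Pairwise (fun x y => 0 ≤ B x y) := by
      rw [hl, List.pairwise_ofFn]
      exact fun i j h => hcompat i j h
    have hDlB : DD l B = B := by
      funext i j
      by_cases hij : i = j
      · subst hij
        rcases DD_sign l B i i with h | h <;> rw [h, hBii] <;> ring
      · exact DD_mem_mem l B i j hnodup (hmem i) (hmem j) hij
    have hprod : (List.ofFn fun i => refl (σ i)) = l.map refl := by
      rw [hl, List.map_ofFn]
      rfl
    have hsink : ∀ a t, (a :: t) <:+ l → ∀ j, DD t B a j ≤ 0 := by
      rintro a t ⟨pre, hpre⟩ j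
      have hpw2 : (pre ++ a :: t).Pairwise (fun x y => 0 ≤ B x y) := by rw [hpre]; exact hpw
      obtain ⟨hpre_pw, hat_pw, hcross⟩ := List.pairwise_append.mp hpw2
      have hta : ∀ y ∈ t, 0 ≤ B a y := (List.pairwise_cons.mp hat_pw).1
      have hnd2 : (pre ++ a :: t).Nodup := by rw [hpre]; exact hnodup
      have hatnd : (a :: t).Nodup := (List.nodup_append.mp hnd2).2.1
      have hat : a ∉ t := (List.nodup_cons.mp hatnd).1
      have htnd : t.Nodup := (List.nodup_cons.mp hatnd).2
      by_cases hjt : j ∈ t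
      · rw [DD_notmem_mem t B a j htnd hat hjt]
        have := hta j hjt
        omega
      · rw [DD_notmem_notmem t B a j hat hjt]
        have hjl : j ∈ pre ++ a :: t := by rw [hpre]; exact hmem j
        rcases List.mem_append.mp hjl with hjp | hjat
        · have h1 : 0 ≤ B j a := hcross j hjp a ((List.mem_cons_self : a ∈ a :: t))
          exact skew_nonpos d B hd hskew a j h1
        · rcases List.mem_cons.mp hjat with rfl | h
          · rw [hBii]
          · exact absurd h hjt
    have hmain := omega_chain α d hd refl ω hωdef l B hskew hreflB hsink x y
    rw [hDlB, ← hprod] at hmain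
    exact hmain.symm
end

section
/- Let W be a Coxeter group, J ⊆ S, and W_J the standard parabolic subgroup generated by J. For w ∈ W let w_J denote the unique maximal element of W_J lying below w in the right weak order. Then the inversion set of w_J equals inv(w) ∩ W_J, i.e., a reflection t ∈ W_J is an inversion of w_J if and only if it is an inversion of w. -/
open scoped Classical

namespace StrongExchangeAux

open CoxeterSystem List

variable {B W : Type*} [Group W] {M : CoxeterMatrix B} (cs : CoxeterSystem M W)

local prefix:100 "s" => cs.simple
local prefix:100 "π" => cs.wordProd
local prefix:100 "ℓ" => cs.length
local prefix:100 "ris" => cs.rightInvSeq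
local prefix:100 "lis" => cs.leftInvSeq

/-- The function underlying the permutation attached to a simple reflection. -/
noncomputable def sigmaFun (i : B) : W × ℤˣ → W × ℤˣ :=
  fun x => (s i * x.1 * s i, if x.1 = s i then -x.2 else x.2)

lemma sigmaFun_involutive (i : B) : Function.Involutive (sigmaFun cs i) := by
  rintro ⟨t, ε⟩
  have key : (s i * t * s i = s i) ↔ t = s i := by
    constructor
    · intro h
      have := congrArg (fun z => s i * z * s i) h
      simpa [mul_assoc, cs.simple_mul_simple_cancel_left,
        cs.simple_mul_simple_cancel_right] using this
    · rintro rfl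
      simp [cs.simple_mul_simple_self, mul_assoc]
  by_cases h : t = s i
  · simp [sigmaFun, key, h, mul_assoc, cs.simple_mul_simple_cancel_left,
      cs.simple_mul_simple_cancel_right]
  · have h2 : ¬ (t * s i = 1) := fun hh => h (by
      have := congrArg (· * s i) hh
      simpa [mul_assoc, cs.simple_mul_simple_cancel_right] using this)
    simp [sigmaFun, key, h, h2, mul_assoc, cs.simple_mul_simple_cancel_left,
      cs.simple_mul_simple_cancel_right]

/-- The permutation of `W × ℤˣ` attached to a simple reflection. -/
noncomputable def sigma (i : B) : Equiv.Perm (W × ℤˣ) :=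
  (sigmaFun_involutive cs i).toPerm

lemma sigma_apply (i : B) (t : W) (ε : ℤˣ) :
    sigma cs i (t, ε) = (s i * t * s i, ε * (if t = s i then -1 else 1)) := by
  by_cases h : t = s i <;>
    simp [sigma, Function.Involutive.toPerm, sigmaFun, h, mul_comm]

lemma sigma_mul_pow_apply (i i' : B) (n : ℕ) (t : W) (ε : ℤˣ) :
    ((sigma cs i * sigma cs i') ^ n) (t, ε) =
      (((s i' * s i) ^ n)⁻¹ * t * (s i' * s i) ^ n,
        ε * ∏ j ∈ Finset.range (2 * n),
          (if t = (s i' * s i) ^ (j + 1) * s i then (-1 : ℤˣ) else 1)) := by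
  set q : W := s i' * s i with hq
  have hqs : q * s i = s i' := by
    rw [hq, mul_assoc, cs.simple_mul_simple_self, mul_one]
  have hsq : s i * q⁻¹ = q * s i := by
    rw [hq, mul_inv_rev, cs.inv_simple, cs.inv_simple, ← mul_assoc,
      cs.simple_mul_simple_self, one_mul, hqs]
  have hcon : ∀ a b c : W, (a⁻¹ * b * a = c) ↔ (b = a * c * a⁻¹) := by
    intro a b c
    constructor
    · intro h; rw [← h]; group
    · intro h; rw [h]; group
  have hcon2 : ∀ a b c : W, (a * b * a = c) ↔ (b = a⁻¹ * c * a⁻¹) := by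
    intro a b c
    constructor
    · intro h; rw [← h]; group
    · intro h; rw [h]; group
  induction n generalizing t ε with
  | zero => simp
  | succ n ih =>
    rw [pow_succ, Equiv.Perm.mul_apply, Equiv.Perm.mul_apply, sigma_apply, sigma_apply, ih]
    have e1 : s i * (s i' * t * s i') * s i = q⁻¹ * t * q := by
      rw [hq, mul_inv_rev, cs.inv_simple, cs.inv_simple]
      group
    have h2 : q ^ 2 * s i = s i' * s i * s i' := by
      rw [sq, mul_assoc, hqs, hq]
    have e2 : (s i' * t * s i' = s i) ↔ (t = q ^ 2 * s i) := by
      rw [hcon2, cs.inv_simple]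
      rw [h2]
    have e3 : ∀ j : ℕ, (q⁻¹ * t * q = q ^ (j + 1) * s i) ↔ (t = q ^ (j + 3) * s i) := by
      intro j
      rw [hcon]
      have : q * (q ^ (j + 1) * s i) * q⁻¹ = q ^ (j + 3) * s i := by
        rw [← mul_assoc, ← pow_succ', mul_assoc, hsq, ← mul_assoc, ← pow_succ]
      rw [this]
    simp only [e1, e2, e3]
    rw [Prod.mk.injEq]
    constructor
    · rw [pow_succ]
      group
    · have h2n : 2 * (n + 1) = 2 * n + 1 + 1 := by ring
      rw [h2n, Finset.prod_range_succ', Finset.prod_range_succ']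
      have c0 : q ^ (0 + 1) * s i = s i' := by rw [zero_add, pow_one, hqs]
      have c1 : q ^ (0 + 1 + 1) = q ^ 2 := by norm_num
      have c2 : ∀ x ∈ Finset.range (2 * n),
          (if t = q ^ (x + 1 + 1 + 1) * s i then (-1 : ℤˣ) else 1)
            = (if t = q ^ (x + 3) * s i then (-1 : ℤˣ) else 1) := by
        intro x _
        have : x + 1 + 1 + 1 = x + 3 := by omega
        rw [this]
      rw [c0, c1, Finset.prod_congr rfl c2]
      simp only [mul_comm, mul_assoc, mul_left_comm]

lemma sigma_liftable : M.IsLiftable (fun i => sigma cs i) := by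
  intro i i'
  set m := M i i' with hm
  rcases Nat.eq_zero_or_pos m with h0 | hpos
  · rw [h0, pow_zero]
  · have hq1 : (s i' * s i) ^ m = 1 := by
      rw [hm]; exact cs.simple_mul_simple_pow' i i'
    apply Equiv.ext
    rintro ⟨t, ε⟩
    rw [sigma_mul_pow_apply, hq1]
    set q : W := s i' * s i with hq
    set g : ℕ → ℤˣ := fun j => if t = q ^ j * s i then -1 else 1 with hg
    have hper : ∀ j, g (j + m) = g j := by
      intro j
      simp only [hg, pow_add, hq1, mul_one]
    have hgsum : ∀ j ∈ Finset.range (2 * m),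
        (if t = q ^ (j + 1) * s i then (-1 : ℤˣ) else 1) = g (j + 1) := by
      intro j _
      rfl
    rw [Finset.prod_congr rfl hgsum]
    have h1 : ∏ j ∈ Finset.range (2 * m), g (j + 1) = ∏ j ∈ Finset.range (2 * m), g j := by
      have e1 := Finset.prod_range_succ g (2 * m)
      have e2 := Finset.prod_range_succ' g (2 * m)
      have e3 : g (2 * m) = g 0 := by
        have : (0 : ℕ) + m + m = 2 * m := by omega
        rw [← this, hper, hper]
      rw [e3] at e1
      rw [e1] at e2
      exact (mul_right_cancel e2).symm
    have h2 : ∏ j ∈ Finset.range (2 * m), g j = 1 := by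
      rw [two_mul, Finset.prod_range_add]
      have : ∀ j ∈ Finset.range m, g (m + j) = g j := by
        intro j _
        rw [add_comm, hper]
      rw [Finset.prod_congr rfl this, Int.units_mul_self]
    rw [h1, h2]
    simp

/-- The homomorphism from `W` to permutations of `W × ℤˣ`. -/
noncomputable def phi : W →* Equiv.Perm (W × ℤˣ) :=
  cs.lift ⟨fun i => sigma cs i, sigma_liftable cs⟩

/-- The sign of the reflection `t` relative to the word `ω`. -/
noncomputable def sgn (ω : List B) (t : W) : ℤˣ :=
  ((ris ω).map (fun r => if t = r then -1 else 1)).prod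

lemma sgn_nil (t : W) : sgn cs [] t = 1 := by simp [sgn]

lemma sgn_cons (i : B) (ω : List B) (t : W) :
    sgn cs (i :: ω) t =
      (if t = (π ω)⁻¹ * s i * π ω then -1 else 1) * sgn cs ω t := by
  simp [sgn, rightInvSeq]

lemma phi_wordProd (ω : List B) (t : W) (ε : ℤˣ) :
    phi cs (π ω) (t, ε) = (π ω * t * (π ω)⁻¹, ε * sgn cs ω t) := by
  induction ω generalizing t ε with
  | nil => simp [sgn_nil]
  | cons i ω ih =>
    rw [cs.wordProd_cons, map_mul, Equiv.Perm.mul_apply, ih]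
    have : phi cs (s i) = sigma cs i := by
      simp [phi]
    rw [this, sigma_apply, sgn_cons]
    rw [Prod.mk.injEq]
    constructor
    · rw [mul_inv_rev, cs.inv_simple]
      group
    · have hiff : (π ω * t * (π ω)⁻¹ = s i) ↔ (t = (π ω)⁻¹ * s i * π ω) := by
        constructor
        · intro h; rw [← h]; group
        · intro h; rw [h]; group
      rw [hiff]
      simp only [mul_comm, mul_assoc, mul_left_comm]

lemma sgn_eq_of_wordProd_eq {ω ω' : List B} (h : π ω = π ω') (t : W) :
    sgn cs ω t = sgn cs ω' t := by
  have h1 := phi_wordProd cs ω t 1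
  have h2 := phi_wordProd cs ω' t 1
  rw [h] at h1
  rw [h1] at h2
  have := congrArg Prod.snd h2
  simpa using this

lemma rightInvSeq_append (ω₁ ω₂ : List B) :
    ris (ω₁ ++ ω₂) = (ris ω₁).map (fun r => (π ω₂)⁻¹ * r * π ω₂) ++ ris ω₂ := by
  induction ω₁ with
  | nil => simp [rightInvSeq]
  | cons i ω₁ ih =>
    show ris (i :: (ω₁ ++ ω₂)) = _
    rw [show cs.rightInvSeq (i :: (ω₁ ++ ω₂))
        = ((π (ω₁ ++ ω₂))⁻¹ * (s i) * (π (ω₁ ++ ω₂))) :: ris (ω₁ ++ ω₂) from rfl, ih]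
    rw [show cs.rightInvSeq (i :: ω₁)
        = ((π ω₁)⁻¹ * (s i) * (π ω₁)) :: ris ω₁ from rfl]
    rw [List.map_cons, cs.wordProd_append, List.cons_append]
    congr 1
    rw [mul_inv_rev]
    group

lemma sgn_append (ω₁ ω₂ : List B) (t : W) :
    sgn cs (ω₁ ++ ω₂) t = sgn cs ω₁ (π ω₂ * t * (π ω₂)⁻¹) * sgn cs ω₂ t := by
  rw [sgn, rightInvSeq_append, List.map_append, List.prod_append]
  congr 1
  rw [List.map_map, sgn]
  apply congrArg
  apply List.map_congr_left
  intro r _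
  simp only [Function.comp_apply]
  congr 1
  rw [eq_iff_iff]
  constructor
  · intro h; rw [h]; group
  · intro h
    have := congrArg (fun z => (π ω₂)⁻¹ * z * π ω₂) h
    rw [← this]; group

lemma mem_rightInvSeq_of_sgn_ne_one {ω : List B} {t : W} (h : sgn cs ω t = -1) :
    t ∈ ris ω := by
  by_contra hmem
  have : sgn cs ω t = 1 := by
    apply List.prod_eq_one
    intro x hx
    rw [List.mem_map] at hx
    obtain ⟨r, hr, rfl⟩ := hx
    have : ¬ (t = r) := fun hh => hmem (hh ▸ hr)
    simp [this]
  rw [this] at h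
  exact absurd h (by decide)

lemma conj_key (a d c k' : W) :
    ((a * c * d) * k' * (a * c * d)⁻¹ = a * c * a⁻¹) ↔ (k' = d⁻¹ * c * d) := by
  constructor
  · intro h
    have h2 := congrArg (fun z => (a * c * d)⁻¹ * z * (a * c * d)) h
    rw [show (a * c * d)⁻¹ * ((a * c * d) * k' * (a * c * d)⁻¹) * (a * c * d) = k' by group] at h2
    rw [h2]; group
  · intro h; rw [h]; group

lemma map_lis_eq_map_ris (ψ : List B) (k : B) :
    (lis ψ).map (fun r => if (π ψ) * s k * (π ψ)⁻¹ = r then (-1 : ℤˣ) else 1)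
      = (ris ψ).map (fun r => if s k = r then (-1 : ℤˣ) else 1) := by
  apply List.ext_getElem
  · simp
  · intro c h1 h2
    have hc : c < ψ.length := by simpa using h1
    have hl : c < (lis ψ).length := by simpa using hc
    have hr : c < (ris ψ).length := by simpa using hc
    simp only [List.getElem_map]
    rw [← List.getD_eq_getElem (lis ψ) 1 hl, ← List.getD_eq_getElem (ris ψ) 1 hr]
    rw [cs.getD_leftInvSeq, cs.getD_rightInvSeq]
    have hget : ψ[c]? = some (ψ.get ⟨c, hc⟩) := List.getElem?_eq_getElem hc
    rw [hget]
    simp only [Option.map_some, Option.getD_some]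
    have hv : π ψ = π (ψ.take c) * s (ψ.get ⟨c, hc⟩) * π (ψ.drop (c + 1)) := by
      conv_lhs => rw [← List.take_append_drop c ψ]
      rw [cs.wordProd_append]
      have hdrop : ψ.drop c = ψ.get ⟨c, hc⟩ :: ψ.drop (c + 1) := by
        rw [List.drop_eq_getElem_cons hc]
        simp
      rw [hdrop, cs.wordProd_cons, ← mul_assoc]
    congr 1
    rw [eq_iff_iff, hv]
    exact conj_key (π (ψ.take c)) (π (ψ.drop (c + 1))) (s (ψ.get ⟨c, hc⟩)) (s k)

lemma sgn_refl_word {t : W} (ht : cs.IsReflection t) :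
    ∃ χ : List B, π χ = t ∧ sgn cs χ t = -1 := by
  obtain ⟨v, k, rfl⟩ := ht
  obtain ⟨ψ, hψ⟩ := cs.wordProd_surjective v
  have hrev : π ψ.reverse = v⁻¹ := by rw [cs.wordProd_reverse, hψ]
  have hcons : π (k :: ψ.reverse) = s k * v⁻¹ := by rw [cs.wordProd_cons, hrev]
  refine ⟨ψ ++ (k :: ψ.reverse), ?_, ?_⟩
  · rw [cs.wordProd_append, hcons, hψ]
    group
  · rw [sgn_append, sgn_cons, hrev]
    have hmid : (v⁻¹)⁻¹ * s k * v⁻¹ = v * s k * v⁻¹ := by group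
    rw [hmid, if_pos rfl]
    have hconj : π (k :: ψ.reverse) * (v * s k * v⁻¹) * (π (k :: ψ.reverse))⁻¹ = s k := by
      rw [hcons, mul_inv_rev, cs.inv_simple, inv_inv]
      simp [mul_assoc, cs.simple_mul_simple_cancel_left]
    rw [hconj]
    have hclaim : sgn cs ψ.reverse (v * s k * v⁻¹) = sgn cs ψ (s k) := by
      rw [sgn, sgn, cs.rightInvSeq_reverse, List.map_reverse, List.prod_reverse]
      rw [← hψ, map_lis_eq_map_ris]
    rw [hclaim]
    rw [neg_one_mul, mul_neg, Int.units_mul_self]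

lemma sgn_eq_neg_one_of_inversion {w t : W} (htr : cs.IsReflection t)
    (hlt : ℓ (w * t) < ℓ w) {ω : List B} (hω : π ω = w) : sgn cs ω t = -1 := by
  obtain ⟨ω', hred, hw't⟩ := cs.exists_reduced_word' (w * t)
  obtain ⟨χ, hχ, hχs⟩ := sgn_refl_word cs htr
  have hprod : π (ω' ++ χ) = w := by
    rw [cs.wordProd_append, ← hw't, hχ, mul_assoc, htr.mul_self, mul_one]
  have h1 : sgn cs ω t = sgn cs (ω' ++ χ) t :=
    sgn_eq_of_wordProd_eq cs (by rw [hω, hprod]) t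
  rw [h1, sgn_append, hχ]
  rw [show t * t * t⁻¹ = t by group]
  have hone : sgn cs ω' t = 1 := by
    rcases Int.units_eq_one_or (sgn cs ω' t) with h | h
    · exact h
    · exfalso
      have hmem := mem_rightInvSeq_of_sgn_ne_one cs h
      have hinv := cs.isRightInversion_of_mem_rightInvSeq hred hmem
      have he : π ω' * t = w := by rw [← hw't, mul_assoc, htr.mul_self, mul_one]
      have := hinv.2
      rw [he, ← hw't] at this
      omega
  rw [hone, hχs, one_mul]

/-- Strong exchange (right), for arbitrary words. -/
theorem mem_rightInvSeq_of_inversion {t : W} (htr : cs.IsReflection t) {ω : List B}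
    (hlt : ℓ (π ω * t) < ℓ (π ω)) : t ∈ ris ω :=
  mem_rightInvSeq_of_sgn_ne_one cs (sgn_eq_neg_one_of_inversion cs htr hlt rfl)

/-- Strong exchange (left), for arbitrary words. -/
theorem mem_leftInvSeq_of_inversion {t : W} (htr : cs.IsReflection t) {ω : List B}
    (hlt : ℓ (t * π ω) < ℓ (π ω)) : t ∈ lis ω := by
  have h1 : ℓ (π ω.reverse * t) < ℓ (π ω.reverse) := by
    rw [cs.wordProd_reverse, ← cs.length_inv, mul_inv_rev, inv_inv, htr.inv, cs.length_inv]
    exact hlt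
  have h2 := mem_rightInvSeq_of_inversion cs htr h1
  rw [cs.rightInvSeq_reverse] at h2
  exact List.mem_reverse.mp h2

lemma leftInvSeq_append (ω₁ ω₂ : List B) :
    lis (ω₁ ++ ω₂) = lis ω₁ ++ (lis ω₂).map (fun z => π ω₁ * z * (π ω₁)⁻¹) := by
  induction ω₁ with
  | nil => simp
  | cons i ω₁ ih =>
    show lis (i :: (ω₁ ++ ω₂)) = _
    rw [show cs.leftInvSeq (i :: (ω₁ ++ ω₂))
        = s i :: (lis (ω₁ ++ ω₂)).map (⇑(MulAut.conj (s i))) from rfl]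
    rw [ih, List.map_append, List.map_map]
    rw [show cs.leftInvSeq (i :: ω₁)
        = s i :: (lis ω₁).map (⇑(MulAut.conj (s i))) from rfl]
    rw [List.cons_append]
    congr 1
    congr 1
    apply List.map_congr_left
    intro z _
    simp only [Function.comp_apply, MulAut.conj_apply]
    rw [cs.wordProd_cons, mul_inv_rev, cs.inv_simple]
    group

section Parabolic

variable (J : Set B)

lemma simple_mem_P {j : B} (hj : j ∈ J) :
    s j ∈ Subgroup.closure (cs.simple '' J) :=
  Subgroup.subset_closure (Set.mem_image_of_mem cs.simple hj)

lemma wordProd_mem_P {γ : List B} (hγ : ∀ b ∈ γ, b ∈ J) :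
    π γ ∈ Subgroup.closure (cs.simple '' J) := by
  induction γ with
  | nil => rw [cs.wordProd_nil]; exact one_mem _
  | cons i γ ih =>
    rw [cs.wordProd_cons]
    exact mul_mem (simple_mem_P cs J (hγ i (by simp)))
      (ih (fun b hb => hγ b (List.mem_cons_of_mem _ hb)))

lemma exists_J_word {w : W} (hw : w ∈ Subgroup.closure (cs.simple '' J)) :
    ∃ γ : List B, (∀ b ∈ γ, b ∈ J) ∧ π γ = w := by
  induction hw using Subgroup.closure_induction with
  | mem x hx =>
    obtain ⟨j, hj, rfl⟩ := hx
    exact ⟨[j], by simpa using hj, by simp⟩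
  | one => exact ⟨[], by simp, by simp⟩
  | mul x y hx hy ihx ihy =>
    obtain ⟨γ₁, h1, rfl⟩ := ihx
    obtain ⟨γ₂, h2, rfl⟩ := ihy
    exact ⟨γ₁ ++ γ₂, by
      intro b hb
      rcases List.mem_append.mp hb with h | h
      exacts [h1 b h, h2 b h], by rw [cs.wordProd_append]⟩
  | inv x hx ihx =>
    obtain ⟨γ, h1, rfl⟩ := ihx
    exact ⟨γ.reverse, fun b hb => h1 b (List.mem_reverse.mp hb), by rw [cs.wordProd_reverse]⟩

lemma mem_P_of_mem_rightInvSeq {γ : List B} (hγ : ∀ b ∈ γ, b ∈ J) {t : W}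
    (ht : t ∈ ris γ) : t ∈ Subgroup.closure (cs.simple '' J) := by
  induction γ with
  | nil => simp [rightInvSeq] at ht
  | cons i γ ih =>
    rw [show cs.rightInvSeq (i :: γ) = ((π γ)⁻¹ * s i * π γ) :: ris γ from rfl] at ht
    have htail : ∀ b ∈ γ, b ∈ J := fun b hb => hγ b (List.mem_cons_of_mem _ hb)
    rcases List.mem_cons.mp ht with rfl | h
    · exact mul_mem (mul_mem (inv_mem (wordProd_mem_P cs J htail))
        (simple_mem_P cs J (hγ i (by simp)))) (wordProd_mem_P cs J htail)
    · exact ih htail h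

lemma refl_mem_P_of_inversion {y t : W} (hy : y ∈ Subgroup.closure (cs.simple '' J))
    (htr : cs.IsReflection t) (hlt : ℓ (t * y) < ℓ y) :
    t ∈ Subgroup.closure (cs.simple '' J) := by
  obtain ⟨γ, hγJ, hγ⟩ := exists_J_word cs J hy
  have h1 : ℓ (π γ.reverse * t) < ℓ (π γ.reverse) := by
    rw [cs.wordProd_reverse, hγ, ← cs.length_inv, mul_inv_rev, inv_inv, htr.inv, cs.length_inv]
    exact hlt
  have h2 := mem_rightInvSeq_of_inversion cs htr h1
  exact mem_P_of_mem_rightInvSeq cs J (fun b hb => hγJ b (List.mem_reverse.mp hb)) h2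

lemma exists_reduced_J_word {w : W} (hw : w ∈ Subgroup.closure (cs.simple '' J)) :
    ∃ γ : List B, (∀ b ∈ γ, b ∈ J) ∧ π γ = w ∧ cs.IsReduced γ := by
  obtain ⟨γ₀, hJ, rfl⟩ := exists_J_word cs J hw
  clear hw
  induction γ₀ with
  | nil => exact ⟨[], by simp, rfl, by simp [CoxeterSystem.IsReduced]⟩
  | cons i γ ih =>
    obtain ⟨δ, hδJ, hδ, hδred⟩ := ih (fun b hb => hJ b (List.mem_cons_of_mem _ hb))
    by_cases hred : cs.IsReduced (i :: δ)
    · refine ⟨i :: δ, ?_, ?_, hred⟩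
      · intro b hb
        rcases List.mem_cons.mp hb with rfl | h
        exacts [hJ b (by simp), hδJ b h]
      · rw [cs.wordProd_cons, cs.wordProd_cons, hδ]
    · rcases cs.length_simple_mul (π δ) i with hplus | hminus
      · exfalso
        apply hred
        show ℓ (π (i :: δ)) = (i :: δ).length
        rw [cs.wordProd_cons, hplus, hδred, List.length_cons]
      · have hinv : ℓ (s i * π δ) < ℓ (π δ) := by omega
        have hmem := mem_leftInvSeq_of_inversion cs (cs.isReflection_simple i) hinv
        obtain ⟨c, hcl, hc⟩ := List.mem_iff_getElem.mp hmem
        have hcδ : c < δ.length := by simpa using hcl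
        have hgetD : (lis δ).getD c 1 = s i := by rw [List.getD_eq_getElem _ _ hcl, hc]
        have herase : s i * π δ = π (δ.eraseIdx c) := by
          rw [← hgetD, cs.getD_leftInvSeq_mul_wordProd]
        have hlen := List.length_eraseIdx_add_one hcδ
        refine ⟨δ.eraseIdx c, ?_, ?_, ?_⟩
        · intro b hb
          exact hδJ b (List.eraseIdx_subset hb)
        · rw [← herase, cs.wordProd_cons, hδ]
        · show ℓ (π (δ.eraseIdx c)) = (δ.eraseIdx c).length
          rw [← herase]
          have h6 : ℓ (π δ) = δ.length := hδred
          omega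

lemma exists_J_descent {v : W} (hv : v ∈ Subgroup.closure (cs.simple '' J)) (hne : v ≠ 1) :
    ∃ j ∈ J, ℓ (s j * v) + 1 = ℓ v := by
  obtain ⟨γ, hγJ, hγ, hγred⟩ := exists_reduced_J_word cs J hv
  cases γ with
  | nil => exact absurd (by rw [← hγ]; simp) hne
  | cons j γ' =>
    refine ⟨j, hγJ j (by simp), ?_⟩
    have h1 : s j * v = π γ' := by
      rw [← hγ, cs.wordProd_cons, cs.simple_mul_simple_cancel_left]
    have h2 : ℓ (π γ') ≤ γ'.length := cs.length_wordProd_le γ'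
    have h3 : ℓ v = γ'.length + 1 := by
      rw [← hγ]
      have : ℓ (π (j :: γ')) = (j :: γ').length := hγred
      rw [this, List.length_cons]
    rcases cs.length_simple_mul v j with h | h
    · rw [h1] at h; omega
    · exact h

lemma coset_min_additive {x : W} (hmin : ∀ v ∈ Subgroup.closure (cs.simple '' J), ℓ x ≤ ℓ (v * x)) :
    ∀ v ∈ Subgroup.closure (cs.simple '' J), ℓ (v * x) = ℓ v + ℓ x := by
  suffices H : ∀ n v, v ∈ Subgroup.closure (cs.simple '' J) → ℓ v = n → ℓ (v * x) = ℓ v + ℓ x by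
    exact fun v hv => H (ℓ v) v hv rfl
  intro n
  induction n using Nat.strong_induction_on with
  | _ n ih =>
    intro v hv hn
    by_cases hv1 : v = 1
    · subst hv1; simp
    · obtain ⟨j, hjJ, hdesc⟩ := exists_J_descent cs J hv hv1
      set v'' := s j * v with hv''def
      have hvv : v = s j * v'' := by rw [hv''def, cs.simple_mul_simple_cancel_left]
      have hv''P : v'' ∈ Subgroup.closure (cs.simple '' J) :=
        mul_mem (simple_mem_P cs J hjJ) hv
      have hlv'' : ℓ v'' + 1 = ℓ v := hdesc
      have hIH := ih (ℓ v'') (by omega) v'' hv''P rfl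
      rcases cs.length_simple_mul (v'' * x) j with h | h
      · have h4 : ℓ (v * x) = ℓ (v'' * x) + 1 := by rw [hvv, mul_assoc]; exact h
        omega
      · exfalso
        obtain ⟨β, hβJ, hβ, hβred⟩ := exists_reduced_J_word cs J hv''P
        obtain ⟨ξ, hξred, hξ⟩ := cs.exists_reduced_word' x
        have hprod : π (β ++ ξ) = v'' * x := by rw [cs.wordProd_append, hβ, ← hξ]
        have hinv : ℓ (s j * π (β ++ ξ)) < ℓ (π (β ++ ξ)) := by rw [hprod]; omega
        have hmem := mem_leftInvSeq_of_inversion cs (cs.isReflection_simple j) hinv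
        rw [leftInvSeq_append] at hmem
        rcases List.mem_append.mp hmem with hm | hm
        · have hli := cs.isLeftInversion_of_mem_leftInvSeq hβred hm
          rw [hβ] at hli
          have h2 := hli.2
          rw [← hvv] at h2
          omega
        · obtain ⟨z, hz, hzeq⟩ := List.mem_map.mp hm
          have hzx := cs.isLeftInversion_of_mem_leftInvSeq hξred hz
          rw [← hξ] at hzx
          have hzP : z ∈ Subgroup.closure (cs.simple '' J) := by
            have hzv : z = v''⁻¹ * s j * v'' := by
              rw [← hzeq, hβ]; group
            rw [hzv]
            exact mul_mem (mul_mem (inv_mem hv''P) (simple_mem_P cs J hjJ)) hv''P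
          have := hmin z hzP
          have := hzx.2
          omega

end Parabolic

lemma inv_split {u w t : W} (hle : ℓ u + ℓ (u⁻¹ * w) = ℓ w) (htr : cs.IsReflection t)
    (hltw : ℓ (t * w) < ℓ w) (hgt : ℓ u < ℓ (t * u)) :
    ℓ ((u⁻¹ * t * u) * (u⁻¹ * w)) < ℓ (u⁻¹ * w) := by
  obtain ⟨α, hαred, hα⟩ := cs.exists_reduced_word' (u⁻¹ * w)⁻¹
  obtain ⟨β, hβred, hβ⟩ := cs.exists_reduced_word' u⁻¹
  have hprod : π (α ++ β) = w⁻¹ := by rw [cs.wordProd_append, ← hα, ← hβ]; group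
  have hrt : ℓ (π (α ++ β) * t) < ℓ (π (α ++ β)) := by
    have e : ℓ (w⁻¹ * t) = ℓ (t * w) := by
      rw [← cs.length_inv (w⁻¹ * t), mul_inv_rev, inv_inv, htr.inv]
    rw [hprod, e, cs.length_inv]
    exact hltw
  have hmem := mem_rightInvSeq_of_inversion cs htr hrt
  rw [rightInvSeq_append] at hmem
  rcases List.mem_append.mp hmem with hm | hm
  · obtain ⟨z, hz, hzeq⟩ := List.mem_map.mp hm
    have hzref := cs.isReflection_of_mem_rightInvSeq α hz
    have hzinv := (cs.isRightInversion_of_mem_rightInvSeq hαred hz).2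
    rw [← hα] at hzinv
    have hz2 : z = u⁻¹ * t * u := by
      rw [← hzeq, ← hβ]; group
    have e3 : ℓ ((u⁻¹ * w)⁻¹ * z) = ℓ (z * (u⁻¹ * w)) := by
      rw [← cs.length_inv ((u⁻¹ * w)⁻¹ * z), mul_inv_rev, inv_inv, hzref.inv]
    rw [e3, hz2, cs.length_inv] at hzinv
    exact hzinv
  · exfalso
    have h5 := (cs.isRightInversion_of_mem_rightInvSeq hβred hm).2
    rw [← hβ] at h5
    have e : ℓ (u⁻¹ * t) = ℓ (t * u) := by
      rw [← cs.length_inv (u⁻¹ * t), mul_inv_rev, inv_inv, htr.inv]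
    rw [e, cs.length_inv] at h5
    omega

end StrongExchangeAux


/-- Right weak order on a Coxeter group: `u ≤ v` iff lengths add along `u⁻¹v`. -/
def weakLE {B W : Type*} [Group W] {M : CoxeterMatrix B}
    (cs : CoxeterSystem M W) (u v : W) : Prop :=
  cs.length u + cs.length (u⁻¹ * v) = cs.length v

/-- The set of inversions of `w`: reflections `t` with ℓ(tw) < ℓ(w). -/
def inversionSet {B W : Type*} [Group W] {M : CoxeterMatrix B}
    (cs : CoxeterSystem M W) (w : W) : Set W :=
  {t | cs.IsReflection t ∧ cs.length (t * w) < cs.length w}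

/-- If w_J is the maximal element of the standard parabolic
subgroup W_J lying weakly below w, then inv(w_J) = inv(w) ∩ W_J. -/
theorem inversions_of_parabolic_projection {B W : Type*} [Group W]
    {M : CoxeterMatrix B} (cs : CoxeterSystem M W)
    (J : Set B) (w wJ : W)
    (hmem : wJ ∈ Subgroup.closure (cs.simple '' J))
    (hle : weakLE cs wJ w)
    (hmax : ∀ u ∈ Subgroup.closure (cs.simple '' J), weakLE cs u w → weakLE cs u wJ) :
    inversionSet cs wJ =
      inversionSet cs w ∩ (Subgroup.closure (cs.simple '' J) : Set W) := by
  have hlewJ : cs.length wJ + cs.length (wJ⁻¹ * w) = cs.length w := hle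
  ext t
  simp only [inversionSet, Set.mem_setOf_eq, Set.mem_inter_iff, SetLike.mem_coe]
  constructor
  · rintro ⟨htr, hlt⟩
    refine ⟨⟨htr, ?_⟩, ?_⟩
    · have h1 := cs.length_mul_le (t * wJ) (wJ⁻¹ * w)
      rw [show t * wJ * (wJ⁻¹ * w) = t * w by group] at h1
      omega
    · exact StrongExchangeAux.refl_mem_P_of_inversion cs J hmem htr hlt
  · rintro ⟨⟨htr, hltw⟩, htP⟩
    refine ⟨htr, ?_⟩
    by_contra hnlt
    have hne := htr.length_mul_right_ne wJ
    have hgt : cs.length wJ < cs.length (t * wJ) := by omega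
    set x : W := wJ⁻¹ * w with hx
    set z : W := wJ⁻¹ * t * wJ with hz
    have hsplit := StrongExchangeAux.inv_split cs hlewJ htr hltw hgt
    rw [← hx, ← hz] at hsplit
    have hzP : z ∈ Subgroup.closure (cs.simple '' J) := by
      rw [hz]
      exact mul_mem (mul_mem (inv_mem hmem) htP) hmem
    have hex : ∃ n : ℕ, ∃ v, v ∈ Subgroup.closure (cs.simple '' J) ∧ cs.length (v * x) = n :=
      ⟨cs.length x, 1, one_mem _, by rw [one_mul]⟩
    set k := Nat.find hex with hk
    obtain ⟨v₀, hv₀P, hv₀len⟩ := Nat.find_spec hex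
    have hmink : ∀ v ∈ Subgroup.closure (cs.simple '' J), k ≤ cs.length (v * x) :=
      fun v hv => Nat.find_min' hex ⟨v, hv, rfl⟩
    set x₀ : W := v₀ * x with hx₀
    have hmin₀ : ∀ v ∈ Subgroup.closure (cs.simple '' J), cs.length x₀ ≤ cs.length (v * x₀) := by
      intro v hv
      calc cs.length x₀ = k := hv₀len
        _ ≤ cs.length ((v * v₀) * x) := hmink _ (mul_mem hv hv₀P)
        _ = cs.length (v * x₀) := by rw [hx₀, mul_assoc]
    have hall := StrongExchangeAux.coset_min_additive cs J hmin₀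
    have hxdecomp : cs.length x = cs.length v₀ + cs.length x₀ := by
      have h7 := hall v₀⁻¹ (inv_mem hv₀P)
      rw [show v₀⁻¹ * x₀ = x by rw [hx₀]; group, cs.length_inv] at h7
      exact h7
    have hv₀ne : cs.length v₀ ≠ 0 := by
      intro h0
      have h8 := hmink z hzP
      have h9 : cs.length x₀ = k := hv₀len
      omega
    have hu''P : wJ * v₀⁻¹ ∈ Subgroup.closure (cs.simple '' J) := mul_mem hmem (inv_mem hv₀P)
    have hu''w : (wJ * v₀⁻¹)⁻¹ * w = x₀ := by rw [hx₀, hx]; group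
    have l1 : cs.length (wJ * v₀⁻¹) ≤ cs.length wJ + cs.length v₀ := by
      have h10 := cs.length_mul_le wJ v₀⁻¹
      rw [cs.length_inv] at h10
      exact h10
    have l2 : cs.length w ≤ cs.length (wJ * v₀⁻¹) + cs.length x₀ := by
      have h11 := cs.length_mul_le (wJ * v₀⁻¹) x₀
      rw [show (wJ * v₀⁻¹) * x₀ = w by rw [← hu''w]; group] at h11
      exact h11
    have hwle : weakLE cs (wJ * v₀⁻¹) w := by
      show cs.length (wJ * v₀⁻¹) + cs.length ((wJ * v₀⁻¹)⁻¹ * w) = cs.length w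
      rw [hu''w]
      omega
    have hmaxres : cs.length (wJ * v₀⁻¹) + cs.length ((wJ * v₀⁻¹)⁻¹ * wJ) = cs.length wJ :=
      hmax (wJ * v₀⁻¹) hu''P hwle
    rw [show (wJ * v₀⁻¹)⁻¹ * wJ = v₀ by group] at hmaxres
    omega
end

section
/- Let P be a poset and let C ⊆ P be a subset such that every w ∈ P has a maximum element π(w) among the elements of C weakly below w, and suppose the resulting map π : P → P is order-preserving. Let p : P → P be an order-preserving map satisfying: p(w) ≤ w for all w; p(p(w)) = p(w); the image p(P) is an order ideal of P; and C is closed under p (i.e., p(C) ⊆ C). Then π(p(w)) = p(π(w)) for all w ∈ P. -/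
/-- Abstract commutation of the sortable projection π with an
order-preserving, decreasing, idempotent projection p whose image is an order
ideal and which preserves C: π(p(w)) = p(π(w)). -/
theorem projection_commutes {P : Type*} [PartialOrder P]
    (C : Set P) (π p : P → P)
    (hπC : ∀ w, π w ∈ C) (hπle : ∀ w, π w ≤ w)
    (hπmax : ∀ w, ∀ u ∈ C, u ≤ w → u ≤ π w)
    (hπmono : Monotone π)
    (hpmono : Monotone p) (hple : ∀ w, p w ≤ w)
    (hpidem : ∀ w, p (p w) = p w)
    (hideal : ∀ x y : P, y ≤ p x → y ∈ Set.range p)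
    (hpC : ∀ x ∈ C, p x ∈ C) :
    ∀ w, π (p w) = p (π w) := by
  intro w
  apply le_antisymm
  · -- π (p w) is in range p, hence fixed by p
    obtain ⟨y, hy⟩ := hideal (p w) (π (p w)) (by rw [hpidem]; exact hπle _)
    have hfix : p (π (p w)) = π (p w) := by rw [← hy, hpidem]
    calc π (p w) = p (π (p w)) := hfix.symm
      _ ≤ p (π w) := hpmono (hπmono (hple w))
  · exact hπmax _ _ (hpC _ (hπC w)) (hpmono (hπle w))
end
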